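/- arXiv:2108.04969 — 4 statements merged into one kernel-verified Lean document; each statement's English description precedes it below -/
import Mathlib

section
/- Let a : ℕ → ℕ be any function and n ≥ 1. In the ring of formal power series ℤ⟦X⟧, the coefficient of X^n in the finite product ∏_{i=1}^{n} (1 − a(i)·X^i)⁻¹ equals the sum, over all partitions p of n, of the product ∏_{i ∈ p} a(i). -/
open PowerSeries

open Finset in
lemma geom_inverse (a : ℤ) (i : ℕ) (hi : 0 < i) :
    Ring.inverse (1 - PowerSeries.C (R := ℤ) a * (PowerSeries.X : ℤ⟦X⟧) ^ i)
      = PowerSeries.mk (fun d => if i ∣ d then a ^ (d / i) else 0) := by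
  set f : ℤ⟦X⟧ := PowerSeries.mk (fun d => if i ∣ d then a ^ (d / i) else 0) with hf
  have key : f * (1 - PowerSeries.C (R := ℤ) a * (PowerSeries.X : ℤ⟦X⟧) ^ i) = 1 := by
    ext d
    rw [mul_sub, mul_one, map_sub, ← mul_assoc]
    rw [mul_comm f (PowerSeries.C (R := ℤ) a), mul_assoc, PowerSeries.coeff_C_mul,
      PowerSeries.coeff_mul_X_pow']
    simp only [hf, PowerSeries.coeff_mk, PowerSeries.coeff_one]
    rcases eq_or_ne d 0 with rfl | hd
    · simp [Nat.le_zero, hi.ne']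
    · rw [if_neg hd]
      by_cases hle : i ≤ d
      · rw [if_pos hle]
        have h2 : (i ∣ d - i) ↔ (i ∣ d) :=
          ⟨fun h => by simpa [Nat.sub_add_cancel hle] using Nat.dvd_add h (dvd_refl i),
           fun h => Nat.dvd_sub h dvd_rfl⟩
        by_cases hdvd : i ∣ d
        · obtain ⟨c, rfl⟩ := hdvd
          have hc : c ≠ 0 := by rintro rfl; simp at hd
          have h3 : (i * c - i) / i = c - 1 := by
            rw [show i * c - i = i * (c - 1) by rw [Nat.mul_sub, mul_one],
              Nat.mul_div_cancel_left _ hi]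
          rw [if_pos ⟨c, rfl⟩, if_pos (h2.mpr ⟨c, rfl⟩), h3, Nat.mul_div_cancel_left _ hi]
          obtain ⟨c, rfl⟩ := Nat.exists_eq_succ_of_ne_zero hc
          simp [pow_succ]
          ring
        · rw [if_neg hdvd, if_neg (fun h => hdvd (h2.mp h)), mul_zero, sub_zero]
      · rw [if_neg hle, mul_zero, sub_zero,
          if_neg (fun h => hle (Nat.le_of_dvd (Nat.pos_of_ne_zero hd) h))]
  have key2 : (1 - PowerSeries.C (R := ℤ) a * (PowerSeries.X : ℤ⟦X⟧) ^ i) * f = 1 := by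
    rw [mul_comm]; exact key
  have hu : IsUnit (1 - PowerSeries.C (R := ℤ) a * (PowerSeries.X : ℤ⟦X⟧) ^ i) :=
    IsUnit.of_mul_eq_one _ key2
  calc Ring.inverse (1 - PowerSeries.C (R := ℤ) a * (PowerSeries.X : ℤ⟦X⟧) ^ i)
      = Ring.inverse _ * ((1 - PowerSeries.C (R := ℤ) a * (PowerSeries.X : ℤ⟦X⟧) ^ i) * f) := by
        rw [key2, mul_one]
    _ = f := by rw [← mul_assoc, Ring.inverse_mul_cancel _ hu, one_mul]

/-- For any `a : ℕ → ℕ` and `n ≥ 1`, the coefficient of `X^n` in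
`∏_{i=1}^{n} (1 - a i * X^i)⁻¹` (inverses taken via `Ring.inverse` in `ℤ⟦X⟧`)
equals the sum over partitions `p` of `n` of `∏_{i ∈ p} a i`. -/
theorem stmt_2 (a : ℕ → ℕ) (n : ℕ) (hn : 1 ≤ n) :
    PowerSeries.coeff (R := ℤ) n
        (∏ i ∈ Finset.Icc 1 n,
          Ring.inverse (1 - PowerSeries.C (R := ℤ) (a i : ℤ) * (PowerSeries.X : ℤ⟦X⟧) ^ i))
      = ∑ p : Nat.Partition n, ((p.parts.map a).prod : ℤ) := by
  classical
  rw [Finset.prod_congr rfl (fun i hi => geom_inverse (a i : ℤ) i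
      (by simp only [Finset.mem_Icc] at hi; omega)),
    PowerSeries.coeff_prod]
  simp only [PowerSeries.coeff_mk]
  rw [← Finset.sum_filter_of_ne (p := fun l : ℕ →₀ ℕ => ∀ i ∈ Finset.Icc 1 n, i ∣ l i)
    (by
      intro l _ hne i hi
      by_contra hdvd
      exact hne (Finset.prod_eq_zero hi (if_neg hdvd)))]
  symm
  refine Finset.sum_bij (fun (p : Nat.Partition n) _ =>
    (⟨p.parts.toFinset, fun i => p.parts.count i * i, ?_⟩ : ℕ →₀ ℕ)) ?_ ?_ ?_ ?_
  · intro i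
    simp only [Multiset.mem_toFinset, ne_eq, Nat.mul_eq_zero, not_or,
      Multiset.count_eq_zero, not_not]
    constructor
    · intro hi
      exact ⟨by simp [Multiset.count_eq_zero.mpr, hi, Multiset.count_eq_zero_of_notMem,
        (Multiset.count_pos.mpr hi).ne'], (p.parts_pos hi).ne'⟩
    · exact fun h => h.1
  · -- membership in filter
    intro p _
    simp only [Finset.mem_filter, Finset.mem_finsuppAntidiag]
    have hsupp : p.parts.toFinset ⊆ Finset.Icc 1 n := by
      intro i hi
      rw [Multiset.mem_toFinset] at hi
      rw [Finset.mem_Icc]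
      exact ⟨p.parts_pos hi, (Multiset.le_sum_of_mem hi).trans_eq p.parts_sum⟩
    refine ⟨⟨?_, ?_⟩, ?_⟩
    · rw [← Finset.sum_subset hsupp (fun x _ hx => by
        simp only [Finsupp.coe_mk]
        rw [Multiset.count_eq_zero_of_notMem (fun h => hx (Multiset.mem_toFinset.mpr h)),
          zero_mul])]
      simp only [Finsupp.coe_mk]
      conv_rhs => rw [← p.parts_sum]
      rw [Finset.sum_multiset_count]
      simp [Finsupp.coe_mk]
    · exact fun i hi => hsupp hi
    · intro i _
      simp only [Finsupp.coe_mk]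
      exact dvd_mul_left i _
  · -- injectivity
    intro p₁ _ p₂ _ h
    have h' : ∀ j, p₁.parts.count j * j = p₂.parts.count j * j := fun j =>
      congrFun (congrArg (fun f : ℕ →₀ ℕ => (f : ℕ → ℕ)) h) j
    ext : 1
    ext j
    rcases Nat.eq_zero_or_pos j with rfl | hj
    · rw [Multiset.count_eq_zero_of_notMem (fun hc => (p₁.parts_pos hc).false),
        Multiset.count_eq_zero_of_notMem (fun hc => (p₂.parts_pos hc).false)]
    · exact Nat.eq_of_mul_eq_mul_right hj (h' j)
  · -- surjectivity
    intro l hl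
    simp only [Finset.mem_filter, Finset.mem_finsuppAntidiag] at hl
    obtain ⟨⟨hsum, hsupp⟩, hdvd⟩ := hl
    refine ⟨⟨l.sum fun i k => Multiset.replicate (k / i) i, ?_, ?_⟩, Finset.mem_univ _, ?_⟩
    · intro j hj
      rw [Finsupp.sum, Multiset.mem_sum] at hj
      obtain ⟨i, hi, hji⟩ := hj
      rw [Multiset.eq_of_mem_replicate hji]
      exact (Finset.mem_Icc.mp (hsupp hi)).1
    · rw [Finsupp.sum, ← Multiset.coe_sumAddMonoidHom, map_sum]
      simp only [Multiset.coe_sumAddMonoidHom, Multiset.sum_replicate, smul_eq_mul]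
      rw [Finset.sum_congr rfl (fun i hi => Nat.div_mul_cancel (hdvd i (hsupp hi))), ← hsum]
      exact Finset.sum_subset hsupp (fun x _ hx => Finsupp.notMem_support_iff.mp hx)
    · ext j
      simp only [Finsupp.coe_mk, Finsupp.sum, Multiset.count_sum', Multiset.count_replicate]
      rw [Finset.sum_ite_eq' l.support j (fun i => l i / i)]
      by_cases hj : j ∈ l.support
      · rw [if_pos hj, Nat.div_mul_cancel (hdvd j (hsupp hj))]
      · rw [if_neg hj, zero_mul, (Finsupp.notMem_support_iff.mp hj).symm]
  · -- values agree
    intro p _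
    simp only [Finsupp.coe_mk]
    rw [Finset.prod_congr rfl (fun i hi => by
      show _ = ((a i : ℤ)) ^ (p.parts.count i)
      rw [if_pos (dvd_mul_left i (p.parts.count i)),
        Nat.mul_div_cancel _ (show 0 < i by simp only [Finset.mem_Icc] at hi; omega)])]
    rw [← Finset.prod_subset (show p.parts.toFinset ⊆ Finset.Icc 1 n from fun i hi => by
        rw [Multiset.mem_toFinset] at hi
        rw [Finset.mem_Icc]
        exact ⟨p.parts_pos hi, (Multiset.le_sum_of_mem hi).trans_eq p.parts_sum⟩)
      (fun x _ hx => by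
        rw [Multiset.count_eq_zero_of_notMem (fun h => hx (Multiset.mem_toFinset.mpr h)),
          pow_zero])]
    rw [Finset.prod_multiset_map_count]
    push_cast
    rfl
end

section
/- Let a : ℕ → ℕ satisfy a(1) = 1 and a(2) = 1. Then the following are equivalent: (i) for every n ≥ 1, a(n+2) equals the sum over all partitions p of n of the product ∏_{i ∈ p} a(i); (ii) for every n ≥ 1, a(n) equals the coefficient of X^n in the formal power series X + X²·∏_{i=1}^{n} (1 − a(i)·X^i)⁻¹ in ℤ⟦X⟧. -/
open PowerSeries


lemma geom_inv {R : Type*} [CommRing R] (c : R) (i : ℕ) (hi : 0 < i) :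
    Ring.inverse (1 - PowerSeries.C c * (PowerSeries.X : R⟦X⟧) ^ i) =
      PowerSeries.mk (fun k => if i ∣ k then c ^ (k / i) else 0) := by
  set g : R⟦X⟧ := PowerSeries.mk (fun k => if i ∣ k then c ^ (k / i) else 0) with hg
  have hmul : (1 - PowerSeries.C c * (PowerSeries.X : R⟦X⟧) ^ i) * g = 1 := by
    ext n
    rw [sub_mul, one_mul, map_sub]
    have h2 : PowerSeries.C c * (PowerSeries.X:R⟦X⟧) ^ i * g = PowerSeries.C c * (g * X ^ i) := by
      ring
    rw [h2, coeff_C_mul, PowerSeries.coeff_mul_X_pow']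
    rcases Nat.eq_zero_or_pos n with rfl | hn
    · simp [hg, coeff_mk, Nat.not_le.mpr hi]
    · rw [PowerSeries.coeff_one, if_neg hn.ne']
      simp only [hg, coeff_mk]
      by_cases hd : i ∣ n
      · have hin : i ≤ n := Nat.le_of_dvd hn hd
        rw [if_pos hd, if_pos hin, if_pos (Nat.dvd_sub hd dvd_rfl)]
        obtain ⟨q, rfl⟩ := hd
        have hq : 0 < q := Nat.pos_of_ne_zero (by rintro rfl; simp at hn)
        have h3 : i * q - i = i * (q - 1) := by cases q with | zero => omega | succ r => simp [Nat.mul_succ]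
        rw [h3, Nat.mul_div_cancel_left _ hi, Nat.mul_div_cancel_left _ hi]
        obtain ⟨r, rfl⟩ := Nat.exists_eq_add_of_lt hq
        simp [pow_succ, mul_comm]
      · rw [if_neg hd]
        split_ifs with hin hd2
        · exact absurd (by
            have := dvd_add hd2 (dvd_refl i)
            rwa [Nat.sub_add_cancel hin] at this) hd
        · ring
        · ring
  have hu : IsUnit (1 - PowerSeries.C c * (PowerSeries.X : R⟦X⟧) ^ i) :=
    IsUnit.of_mul_eq_one _ hmul
  obtain ⟨u, huu⟩ := hu
  rw [← huu, Ring.inverse_unit]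
  have : (u : R⟦X⟧) * g = 1 := by rw [huu]; exact hmul
  exact Units.inv_eq_of_mul_eq_one_right this

open Finset in
lemma weightedGF {R : Type*} [CommSemiring R] (w : ℕ → R) (N : ℕ) (s : Finset ℕ)
    (hs : ∀ i ∈ s, 0 < i) (hss : ∀ j : ℕ, j ≠ 0 → j ≤ N → j ∈ s) :
    (∑ p : Nat.Partition N, ((p.parts.map w).prod : R)) =
      PowerSeries.coeff N (∏ i ∈ s, PowerSeries.mk fun k => if i ∣ k then w i ^ (k / i) else 0) := by
  classical
  rw [PowerSeries.coeff_prod]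
  simp_rw [PowerSeries.coeff_mk]
  rw [← Finset.sum_filter_of_ne (p := fun l : ℕ →₀ ℕ => ∀ i ∈ s, i ∣ l i)
    (fun l _ hl => by
      intro i hi
      by_contra hdvd
      exact hl (Finset.prod_eq_zero hi (by rw [if_neg hdvd])))]
  have hmem : ∀ p : Nat.Partition N, ∀ j ∈ p.parts, j ∈ s := fun p j hj =>
    hss j (p.parts_pos hj).ne' (p.parts_sum ▸ Multiset.le_sum_of_mem hj)
  refine Finset.sum_bij'
    (i := fun (p : Nat.Partition N) _ =>
      (⟨Finset.filter (fun i => i ≠ 0) p.parts.toFinset,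
        fun i => Multiset.count i p.parts * i,
        fun i => by
          simp only [ne_eq, mul_eq_zero, Multiset.count_eq_zero, mem_filter,
            Multiset.mem_toFinset]
          tauto⟩ : ℕ →₀ ℕ))
    (j := fun l hl =>
      ⟨∑ i ∈ s, Multiset.replicate (l i / i) i,
        fun {i} hi => by
          simp only [Multiset.mem_sum] at hi
          obtain ⟨t, ht, hz⟩ := hi
          rw [Multiset.eq_of_mem_replicate hz]
          exact hs t ht,
        by
          simp only [mem_filter, mem_finsuppAntidiag] at hl
          simp_rw [Multiset.sum_sum, Multiset.sum_replicate, Nat.nsmul_eq_mul]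
          rw [← hl.1.1]
          exact Finset.sum_congr rfl fun i hi => Nat.div_mul_cancel (hl.2 i hi)⟩)
    ?_ ?_ ?_ ?_ ?_
  · intro p _
    simp only [mem_filter, mem_finsuppAntidiag, Finsupp.coe_mk]
    refine ⟨⟨?_, ?_⟩, fun i _ => dvd_mul_left i _⟩
    · conv_rhs => rw [← p.parts_sum]
      rw [Finset.sum_multiset_count_of_subset _ s
        (fun i hi => hmem p i (Multiset.mem_toFinset.mp hi))]
      simp [smul_eq_mul]
    · intro i hi
      simp only [mem_filter, Multiset.mem_toFinset] at hi
      exact hmem p i hi.1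
  · intro l hl
    exact Finset.mem_univ _
  · intro p _
    apply Nat.Partition.ext
    simp only [Finsupp.coe_mk]
    ext j
    simp_rw [Multiset.count_sum', Multiset.count_replicate, Finset.sum_ite_eq']
    split_ifs with h
    · rw [Nat.mul_div_cancel _ (hs j h)]
    · exact (Multiset.count_eq_zero.mpr (fun hj => h (hmem p j hj))).symm
  · intro l hl
    simp only [mem_filter, mem_finsuppAntidiag] at hl
    ext j
    simp only [Finsupp.coe_mk]
    simp_rw [Multiset.count_sum', Multiset.count_replicate, Finset.sum_ite_eq']
    split_ifs with h
    · exact Nat.div_mul_cancel (hl.2 j h)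
    · rw [zero_mul]
      exact (Finsupp.notMem_support_iff.mp (fun hj => h (hl.1.2 hj))).symm
  · intro p _
    rw [Finset.prod_multiset_map_count]
    rw [Finset.prod_subset (fun i hi => hmem p i (Multiset.mem_toFinset.mp hi))
      (fun i _ hi => by rw [Multiset.count_eq_zero_of_notMem (fun h => hi (Multiset.mem_toFinset.mpr h)), pow_zero])]
    refine Finset.prod_congr rfl fun i hi => ?_
    simp only [Finsupp.coe_mk]
    rw [if_pos (dvd_mul_left i _), Nat.mul_div_cancel _ (hs i hi)]

/-- For `a : ℕ → ℕ` with `a 1 = 1` and `a 2 = 1`, the partition recurrence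
`a (n+2) = ∑_{p ⊢ n} ∏_{i ∈ p} a i` (for all `n ≥ 1`) is equivalent to the
coefficientwise generating function identity
`a n = [X^n] (X + X² ∏_{i=1}^{n} (1 - a i · X^i)⁻¹)` (for all `n ≥ 1`) in `ℤ⟦X⟧`. -/
theorem stmt_4 (a : ℕ → ℕ) (ha1 : a 1 = 1) (ha2 : a 2 = 1) :
    (∀ n : ℕ, 1 ≤ n →
        (a (n + 2) : ℤ) = ∑ p : Nat.Partition n, ((p.parts.map a).prod : ℤ))
      ↔ (∀ n : ℕ, 1 ≤ n →
        (a n : ℤ) = PowerSeries.coeff (R := ℤ) n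
          ((PowerSeries.X : ℤ⟦X⟧) + (PowerSeries.X : ℤ⟦X⟧) ^ 2 *
            ∏ i ∈ Finset.Icc 1 n,
              Ring.inverse (1 - PowerSeries.C (R := ℤ) (a i : ℤ) * (PowerSeries.X : ℤ⟦X⟧) ^ i))) := by
  have hprod : ∀ N m : ℕ, N ≤ m →
      PowerSeries.coeff (R := ℤ) N (∏ i ∈ Finset.Icc 1 m,
          Ring.inverse (1 - PowerSeries.C (R := ℤ) (a i : ℤ) * (PowerSeries.X : ℤ⟦X⟧) ^ i)) =
        ∑ p : Nat.Partition N, ((p.parts.map a).prod : ℤ) := by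
    intro N m hNm
    have heq : (∏ i ∈ Finset.Icc 1 m,
        Ring.inverse (1 - PowerSeries.C (R := ℤ) (a i : ℤ) * (PowerSeries.X : ℤ⟦X⟧) ^ i)) =
        ∏ i ∈ Finset.Icc 1 m,
          PowerSeries.mk (fun k => if i ∣ k then ((a i : ℤ)) ^ (k / i) else 0) :=
      Finset.prod_congr rfl fun i hi =>
        geom_inv _ i (by rw [Finset.mem_Icc] at hi; omega)
    rw [heq, ← weightedGF (fun i => (a i : ℤ)) N (Finset.Icc 1 m)
      (fun i hi => by rw [Finset.mem_Icc] at hi; omega)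
      (fun j hj0 hjN => by rw [Finset.mem_Icc]; omega)]
    · refine Finset.sum_congr rfl fun p _ => ?_
      simp [Multiset.map_map, Function.comp]
  have hcoe : ∀ p : Nat.Partition 0, ((p.parts.map a).prod : ℤ) = 1 := by
    intro p
    have : p.parts = 0 := by
      rw [Multiset.eq_zero_iff_forall_notMem]
      intro i hi
      have h1 := p.parts_pos hi
      have h2 := Multiset.le_sum_of_mem hi
      rw [p.parts_sum] at h2
      omega
    simp [this]
  have hmain : ∀ n : ℕ, 1 ≤ n →
      PowerSeries.coeff (R := ℤ) n
          ((PowerSeries.X : ℤ⟦X⟧) + (PowerSeries.X : ℤ⟦X⟧) ^ 2 *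
            ∏ i ∈ Finset.Icc 1 n,
              Ring.inverse (1 - PowerSeries.C (R := ℤ) (a i : ℤ) * (PowerSeries.X : ℤ⟦X⟧) ^ i)) =
        if n = 1 then 1 else if n = 2 then 1
        else ∑ p : Nat.Partition (n - 2), ((p.parts.map a).prod : ℤ) := by
    intro n hn
    rw [map_add, PowerSeries.coeff_X, PowerSeries.coeff_X_pow_mul']
    rcases eq_or_ne n 1 with rfl | h1
    · norm_num
    rcases eq_or_ne n 2 with rfl | h2
    · rw [if_neg (by norm_num), if_pos (by norm_num), hprod 0 2 (by norm_num)]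
      simp only [hcoe]
      simp
    · rw [if_neg h1, if_pos (by omega), hprod (n - 2) n (by omega), if_neg h1, if_neg h2]
      ring
  constructor
  · intro h n hn
    rw [hmain n hn]
    rcases eq_or_ne n 1 with rfl | h1
    · simp [ha1]
    rcases eq_or_ne n 2 with rfl | h2
    · simp [ha2]
    · rw [if_neg h1, if_neg h2]
      have hn2 : 1 ≤ n - 2 := by omega
      have := h (n - 2) hn2
      rw [show n - 2 + 2 = n by omega] at this
      exact this
  · intro h n hn
    have := h (n + 2) (by omega)
    rw [hmain (n + 2) (by omega)] at this
    rw [if_neg (by omega), if_neg (by omega)] at this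
    rw [show n + 2 - 2 = n by omega] at this
    simpa using this
end

section
/- There exists exactly one function a : ℕ → ℕ with a(0) = 0 such that for every n ≥ 1, a(n) equals the coefficient of X^n in the formal power series X + X²·∏_{i=1}^{n} (1 − a(i)·X^i)⁻¹ in ℤ⟦X⟧. Moreover this unique function satisfies a(1) = 1 and a(2) = 1. -/
open PowerSeries Finset

namespace Stmt5Aux

/-- explicit inverse of `1 - C c * X^i` -/
noncomputable def g (c : ℤ) (i : ℕ) : ℤ⟦X⟧ :=
  PowerSeries.mk fun n => if i ∣ n then c ^ (n / i) else 0

lemma coeff_g (c : ℤ) (i n : ℕ) :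
    coeff (R := ℤ) n (g c i) = if i ∣ n then c ^ (n / i) else 0 := by
  simp [g]

lemma mul_g (c : ℤ) (i : ℕ) (hi : 1 ≤ i) :
    (1 - PowerSeries.C (R := ℤ) c * (X : ℤ⟦X⟧) ^ i) * g c i = 1 := by
  ext n
  rw [coeff_one, sub_mul, one_mul, map_sub, mul_comm (PowerSeries.C (R := ℤ) c), mul_assoc,
    coeff_X_pow_mul', coeff_C_mul, coeff_g, coeff_g]
  by_cases hn : n = 0
  · subst hn
    rw [if_pos (dvd_zero i), if_neg (by omega : ¬ i ≤ 0), if_pos rfl, Nat.zero_div, pow_zero,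
      sub_zero]
  · rw [if_neg hn]
    by_cases hle : i ≤ n
    · rw [if_pos hle]
      by_cases hd : i ∣ n
      · have hd' : i ∣ n - i := Nat.dvd_sub hd dvd_rfl
        rw [if_pos hd, if_pos hd']
        have h1 : n / i = (n - i) / i + 1 := by
          rcases hd with ⟨k, rfl⟩
          have hk : 1 ≤ k := by
            rcases Nat.eq_zero_or_pos k with rfl | h
            · omega
            · exact h
          rw [Nat.mul_div_cancel_left _ (by omega), ← Nat.mul_sub_one,
            Nat.mul_div_cancel_left _ (by omega)]
          omega
        rw [h1, pow_succ]
        ring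
      · have hd' : ¬ i ∣ n - i := by
          intro h
          exact hd (by have := Nat.dvd_add h (dvd_refl i); rwa [Nat.sub_add_cancel hle] at this)
        rw [if_neg hd, if_neg hd']
        ring
    · rw [if_neg hle, if_neg (fun h => hle (Nat.le_of_dvd (by omega) h)), sub_zero]

lemma inverse_eq (c : ℤ) (i : ℕ) (hi : 1 ≤ i) :
    Ring.inverse (1 - PowerSeries.C (R := ℤ) c * (X : ℤ⟦X⟧) ^ i) = g c i := by
  have h := mul_g c i hi
  have h' : g c i * (1 - PowerSeries.C (R := ℤ) c * (X : ℤ⟦X⟧) ^ i) = 1 := by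
    rw [mul_comm]; exact h
  have : IsUnit (1 - PowerSeries.C (R := ℤ) c * (X : ℤ⟦X⟧) ^ i) := IsUnit.of_mul_eq_one _ h
  rcases this with ⟨u, hu⟩
  rw [← hu, Ring.inverse_unit]
  have : (u : ℤ⟦X⟧) * g c i = 1 := by rw [hu]; exact h
  calc (u⁻¹ : ℤ⟦X⟧ˣ).1 = (u⁻¹ : ℤ⟦X⟧ˣ).1 * ((u : ℤ⟦X⟧) * g c i) := by rw [this, mul_one]
    _ = g c i := by rw [← mul_assoc, Units.inv_mul, one_mul]

/-- coefficient-agreement up to degree k -/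
def E (k : ℕ) (f h : ℤ⟦X⟧) : Prop := ∀ j ≤ k, coeff (R := ℤ) j f = coeff (R := ℤ) j h

lemma E_mul {k : ℕ} {f f' h h' : ℤ⟦X⟧} (hf : E k f f') (hh : E k h h') :
    E k (f * h) (f' * h') := by
  intro j hj
  rw [coeff_mul, coeff_mul]
  refine Finset.sum_congr rfl fun p hp => ?_
  rw [Finset.HasAntidiagonal.mem_antidiagonal] at hp
  rw [hf p.1 (by omega), hh p.2 (by omega)]

lemma E_prod {k : ℕ} {s : Finset ℕ} {F G : ℕ → ℤ⟦X⟧}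
    (h : ∀ i ∈ s, E k (F i) (G i)) : E k (∏ i ∈ s, F i) (∏ i ∈ s, G i) := by
  induction s using Finset.induction with
  | empty => intro j hj; rfl
  | @insert x s' hx ih =>
    rw [Finset.prod_insert hx, Finset.prod_insert hx]
    exact E_mul (h x (Finset.mem_insert_self _ _))
      (ih fun i hi => h i (Finset.mem_insert_of_mem hi))

lemma E_g_one {k i : ℕ} (c : ℤ) (hk : k < i) : E k (g c i) 1 := by
  intro j hj
  rw [coeff_g, coeff_one]
  rcases Nat.eq_zero_or_pos j with rfl | hj'
  · simp
  · rw [if_neg (fun h => by have := Nat.le_of_dvd hj' h; omega), if_neg (by omega)]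

/-- the product appearing in the statement -/
noncomputable def P (a : ℕ → ℕ) (m : ℕ) : ℤ⟦X⟧ :=
  ∏ i ∈ Finset.Icc 1 m, Ring.inverse (1 - PowerSeries.C (R := ℤ) (a i : ℤ) * (X : ℤ⟦X⟧) ^ i)

lemma P_eq (a : ℕ → ℕ) (m : ℕ) :
    P a m = ∏ i ∈ Finset.Icc 1 m, g ((a i : ℤ)) i := by
  refine Finset.prod_congr rfl fun i hi => ?_
  rw [Finset.mem_Icc] at hi
  exact inverse_eq _ _ hi.1

lemma E_prod_Icc (c : ℕ → ℕ) (k l : ℕ) (hl : k ≤ l) :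
    E k (∏ i ∈ Finset.Icc 1 l, g ((c i : ℤ)) i) (∏ i ∈ Finset.Icc 1 k, g ((c i : ℤ)) i) := by
  have hsub : Finset.Icc 1 k ⊆ Finset.Icc 1 l := Finset.Icc_subset_Icc_right hl
  have hprod : (∏ i ∈ Finset.Icc 1 k, g ((c i : ℤ)) i)
      = ∏ i ∈ Finset.Icc 1 l, (if i ≤ k then g ((c i : ℤ)) i else 1) := by
    rw [← Finset.prod_subset hsub]
    · refine Finset.prod_congr rfl fun i hi => ?_
      rw [Finset.mem_Icc] at hi
      rw [if_pos hi.2]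
    · intro i hi hni
      rw [Finset.mem_Icc] at hi
      rw [if_neg (fun h => hni (Finset.mem_Icc.mpr ⟨hi.1, h⟩))]
  rw [hprod]
  refine E_prod fun i hi => ?_
  by_cases h : i ≤ k
  · rw [if_pos h]; intro j hj; rfl
  · rw [if_neg h]; exact E_g_one _ (by omega)

lemma E_P {a b : ℕ → ℕ} {k : ℕ} (hab : ∀ i, 1 ≤ i → i ≤ k → a i = b i)
    (m m' : ℕ) (hm : k ≤ m) (hm' : k ≤ m') : E k (P a m) (P b m') := by
  rw [P_eq, P_eq]
  have h1 := E_prod_Icc a k m hm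
  have h2 := E_prod_Icc b k m' hm'
  have h3 : (∏ i ∈ Finset.Icc 1 k, g ((a i : ℤ)) i)
      = ∏ i ∈ Finset.Icc 1 k, g ((b i : ℤ)) i := by
    refine Finset.prod_congr rfl fun i hi => ?_
    rw [Finset.mem_Icc] at hi
    rw [hab i hi.1 hi.2]
  intro j hj
  rw [h1 j hj, h3, ← h2 j hj]



lemma coeff_g_nonneg (c : ℤ) (hc : 0 ≤ c) (i n : ℕ) : 0 ≤ coeff (R := ℤ) n (g c i) := by
  rw [coeff_g]
  split_ifs
  · positivity
  · exact le_refl 0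

lemma coeff_mul_nonneg {f h : ℤ⟦X⟧} (hf : ∀ n, 0 ≤ coeff (R := ℤ) n f) (hh : ∀ n, 0 ≤ coeff (R := ℤ) n h)
    (n : ℕ) : 0 ≤ coeff (R := ℤ) n (f * h) := by
  rw [coeff_mul]
  exact Finset.sum_nonneg fun p _ => mul_nonneg (hf p.1) (hh p.2)

lemma coeff_prod_nonneg {s : Finset ℕ} {F : ℕ → ℤ⟦X⟧}
    (h : ∀ i ∈ s, ∀ n, 0 ≤ coeff (R := ℤ) n (F i)) (n : ℕ) : 0 ≤ coeff (R := ℤ) n (∏ i ∈ s, F i) := by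
  induction s using Finset.induction generalizing n with
  | empty => simp [coeff_one]; split_ifs <;> norm_num
  | @insert x s' hx ih =>
    rw [Finset.prod_insert hx]
    exact coeff_mul_nonneg (h x (Finset.mem_insert_self _ _))
      (fun m => ih (fun i hi => h i (Finset.mem_insert_of_mem hi)) m) n

/-- coefficient of the RHS for n ≥ 2 -/
lemma coeff_rhs (f : ℤ⟦X⟧) {n : ℕ} (hn : 2 ≤ n) :
    coeff (R := ℤ) n ((X : ℤ⟦X⟧) + X ^ 2 * f) = coeff (R := ℤ) (n - 2) f := by
  rw [map_add, coeff_X, if_neg (by omega), coeff_X_pow_mul', if_pos hn, zero_add]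

lemma coeff_rhs_one (f : ℤ⟦X⟧) :
    coeff (R := ℤ) 1 ((X : ℤ⟦X⟧) + X ^ 2 * f) = 1 := by
  rw [map_add, coeff_X, if_pos rfl, coeff_X_pow_mul', if_neg (by omega), add_zero]

noncomputable def aseq : ℕ → ℕ
  | 0 => 0
  | (n+1) =>
    (coeff (R := ℤ) (n+1) ((X : ℤ⟦X⟧) + X ^ 2 *
      ∏ i ∈ (Finset.Icc 1 n).attach, g ((aseq i.1 : ℤ)) i.1)).toNat
decreasing_by
  have := (Finset.mem_Icc.mp i.2).2; omega

lemma aseq_zero : aseq 0 = 0 := by rw [aseq]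

lemma aseq_succ (n : ℕ) : aseq (n+1) =
    (coeff (R := ℤ) (n+1) ((X : ℤ⟦X⟧) + X ^ 2 *
      ∏ i ∈ Finset.Icc 1 n, g ((aseq i : ℤ)) i)).toNat := by
  rw [aseq, ← Finset.prod_attach (Finset.Icc 1 n) (fun i => g ((aseq i : ℤ)) i)]

lemma prod_g_nonneg (a : ℕ → ℕ) (m n : ℕ) :
    0 ≤ coeff (R := ℤ) n (∏ i ∈ Finset.Icc 1 m, g ((a i : ℤ)) i) :=
  coeff_prod_nonneg (fun i _ => coeff_g_nonneg _ (by positivity) i) n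

lemma constCoeff_prod_g (a : ℕ → ℕ) (m : ℕ) :
    coeff (R := ℤ) 0 (∏ i ∈ Finset.Icc 1 m, g ((a i : ℤ)) i) = 1 := by
  rw [coeff_zero_eq_constantCoeff_apply, map_prod]
  refine Finset.prod_eq_one fun i hi => ?_
  rw [← coeff_zero_eq_constantCoeff_apply, coeff_g, if_pos (dvd_zero i), Nat.zero_div, pow_zero]

/-- `aseq` satisfies the defining recursion. -/
lemma aseq_spec (n : ℕ) (hn : 1 ≤ n) :
    ((aseq n : ℤ)) = coeff (R := ℤ) n ((X : ℤ⟦X⟧) + X ^ 2 * P aseq n) := by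
  obtain ⟨m, rfl⟩ : ∃ m, n = m + 1 := ⟨n - 1, by omega⟩
  rw [P_eq]
  rcases Nat.eq_zero_or_pos m with rfl | hm
  · rw [aseq_succ, coeff_rhs_one, coeff_rhs_one]
    rfl
  · have h2 : 2 ≤ m + 1 := by omega
    have key : coeff (R := ℤ) (m + 1 - 2) (∏ i ∈ Finset.Icc 1 m, g ((aseq i : ℤ)) i)
        = coeff (R := ℤ) (m + 1 - 2) (∏ i ∈ Finset.Icc 1 (m+1), g ((aseq i : ℤ)) i) := by
      have := E_P (a := aseq) (b := aseq) (k := m + 1 - 2) (fun _ _ _ => rfl)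
        m (m+1) (by omega) (by omega)
      rw [P_eq, P_eq] at this
      exact this _ le_rfl
    rw [aseq_succ, coeff_rhs _ h2, coeff_rhs _ h2, ← key,
      Int.toNat_of_nonneg (prod_g_nonneg _ _ _)]

end Stmt5Aux

open Stmt5Aux in
/-- There is exactly one function `a : ℕ → ℕ` with `a 0 = 0` satisfying
`a n = [X^n] (X + X² ∏_{i=1}^{n} (1 - a i · X^i)⁻¹)` in `ℤ⟦X⟧` for all `n ≥ 1`,
and this unique function satisfies `a 1 = 1` and `a 2 = 1`. -/
theorem stmt_5 :
    (∃! a : ℕ → ℕ, a 0 = 0 ∧ ∀ n : ℕ, 1 ≤ n →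
        (a n : ℤ) = PowerSeries.coeff (R := ℤ) n
          ((PowerSeries.X : ℤ⟦X⟧) + (PowerSeries.X : ℤ⟦X⟧) ^ 2 *
            ∏ i ∈ Finset.Icc 1 n,
              Ring.inverse (1 - PowerSeries.C (R := ℤ) (a i : ℤ) * (PowerSeries.X : ℤ⟦X⟧) ^ i)))
      ∧ ∀ a : ℕ → ℕ, (a 0 = 0 ∧ ∀ n : ℕ, 1 ≤ n →
        (a n : ℤ) = PowerSeries.coeff (R := ℤ) n
          ((PowerSeries.X : ℤ⟦X⟧) + (PowerSeries.X : ℤ⟦X⟧) ^ 2 *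
            ∏ i ∈ Finset.Icc 1 n,
              Ring.inverse (1 - PowerSeries.C (R := ℤ) (a i : ℤ) * (PowerSeries.X : ℤ⟦X⟧) ^ i)))
        → a 1 = 1 ∧ a 2 = 1 := by
  have key12 : ∀ a : ℕ → ℕ, (a 0 = 0 ∧ ∀ n : ℕ, 1 ≤ n →
      (a n : ℤ) = coeff (R := ℤ) n ((X : ℤ⟦X⟧) + X ^ 2 * P a n)) → a 1 = 1 ∧ a 2 = 1 := by
    rintro a ⟨_, h⟩
    constructor
    · have := h 1 le_rfl
      rw [coeff_rhs_one] at this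
      exact_mod_cast this
    · have := h 2 (by omega)
      rw [coeff_rhs _ le_rfl, P_eq, constCoeff_prod_g] at this
      exact_mod_cast this
  constructor
  · refine ⟨aseq, ⟨aseq_zero, fun n hn => aseq_spec n hn⟩, ?_⟩
    rintro b ⟨hb0, hb⟩
    funext n
    induction n using Nat.strong_induction_on with
    | _ n ih =>
      rcases Nat.eq_zero_or_pos n with rfl | hn
      · rw [hb0, aseq_zero]
      · have ha := aseq_spec n hn
        have hbn := hb n hn
        rcases Nat.lt_or_ge n 2 with h2 | h2
        · interval_cases n
          rw [coeff_rhs_one] at ha hbn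
          have : (b 1 : ℤ) = (aseq 1 : ℤ) := by rw [ha, hbn]
          exact_mod_cast this
        · have hE : coeff (R := ℤ) (n-2) (P b n) = coeff (R := ℤ) (n-2) (P aseq n) :=
            E_P (fun i h1 h2' => ih i (by omega)) n n (by omega) (by omega) _ le_rfl
          rw [coeff_rhs _ h2] at ha hbn
          have hbn' : (b n : ℤ) = coeff (R := ℤ) (n-2) (P b n) := hbn
          have : (b n : ℤ) = (aseq n : ℤ) := by rw [ha, hbn', hE]
          exact_mod_cast this
  · exact key12
end

section
/- Let a : ℕ → ℕ satisfy a(1) = 1. Then for every n ≥ 1, the equation a(n+2) = Σ_{p ⊢ n} ∏_{i ∈ p} a(i), where the sum is over all partitions p of n, holds if and only if the equation a(n+2) = 1 + Σ_{k=2}^{n} Σ_{q} ∏_{i ∈ q} a(i) holds, where the inner sum is over all partitions q of n + 2 − k with every part at least 2. -/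
open Finset Multiset

private def trimP {n : ℕ} (p : Nat.Partition n) : Σ s : ℕ, Nat.Partition s :=
  ⟨(p.parts.filter (2 ≤ ·)).sum,
   { parts := p.parts.filter (2 ≤ ·),
     parts_pos := fun h => p.parts_pos (Multiset.mem_filter.mp h).1,
     parts_sum := rfl }⟩

private lemma sigma_part_ext {s t : ℕ} (p : Nat.Partition s) (q : Nat.Partition t)
    (h : p.parts = q.parts) : (⟨s, p⟩ : Σ k, Nat.Partition k) = ⟨t, q⟩ := by
  have hst : s = t := by rw [← p.parts_sum, ← q.parts_sum, h]
  subst hst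
  rw [Nat.Partition.ext h]

private lemma filter_not_eq {n : ℕ} (p : Nat.Partition n) :
    p.parts.filter (fun i => ¬ 2 ≤ i) =
      Multiset.replicate (n - (p.parts.filter (2 ≤ ·)).sum) 1 := by
  have hall : ∀ i ∈ p.parts.filter (fun i => ¬ 2 ≤ i), i = 1 := by
    intro i hi
    obtain ⟨hm, h2⟩ := Multiset.mem_filter.mp hi
    have := p.parts_pos hm
    omega
  rw [Multiset.eq_replicate]
  refine ⟨?_, hall⟩
  have hm : p.parts.filter (fun i => ¬ 2 ≤ i) =
      Multiset.replicate (Multiset.card (p.parts.filter (fun i => ¬ 2 ≤ i))) 1 :=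
    (Multiset.eq_replicate).mpr ⟨rfl, hall⟩
  have hsum : (p.parts.filter (fun i => ¬ 2 ≤ i)).sum =
      Multiset.card (p.parts.filter (fun i => ¬ 2 ≤ i)) := by
    conv_lhs => rw [hm]
    simp
  have htot : (p.parts.filter (2 ≤ ·)).sum + (p.parts.filter (fun i => ¬ 2 ≤ i)).sum = n := by
    rw [← Multiset.sum_add, Multiset.filter_add_not, p.parts_sum]
  omega

private lemma prod_trim {n : ℕ} (a : ℕ → ℕ) (ha : a 1 = 1) (p : Nat.Partition n) :
    (p.parts.map a).prod = ((p.parts.filter (2 ≤ ·)).map a).prod := by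
  conv_lhs => rw [← Multiset.filter_add_not (2 ≤ ·) p.parts]
  rw [Multiset.map_add, Multiset.prod_add, filter_not_eq]
  simp [Multiset.map_replicate, ha]

private lemma main_eq (a : ℕ → ℕ) (ha : a 1 = 1) (n : ℕ) :
    ∑ p : Nat.Partition n, ((p.parts.map a).prod) =
      ∑ s ∈ Finset.Icc 0 n, ∑ q ∈ Finset.univ.filter
          (fun q : Nat.Partition s => ∀ i ∈ q.parts, 2 ≤ i), ((q.parts.map a).prod) := by
  rw [Finset.sum_sigma']
  refine Finset.sum_bij' (fun p _ => trimP p)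
    (fun x hx => ⟨x.2.parts + Multiset.replicate (n - x.1) 1, ?_, ?_⟩) ?_ ?_ ?_ ?_ ?_
  · intro i hi
    rcases Multiset.mem_add.mp hi with h | h
    · exact x.2.parts_pos h
    · rw [Multiset.eq_of_mem_replicate h]; norm_num
  · rw [Multiset.sum_add, x.2.parts_sum, Multiset.sum_replicate, smul_eq_mul, mul_one]
    have : x.1 ≤ n := by
      have := (Finset.mem_sigma.mp hx).1
      simpa using this
    omega
  · -- trimP p ∈ sigma set
    intro p _
    rw [Finset.mem_sigma]
    constructor
    · simp only [Finset.mem_Icc, Nat.zero_le, true_and]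
      show (Multiset.filter (fun x => 2 ≤ x) p.parts).sum ≤ n
      obtain ⟨u, hu⟩ := Multiset.le_iff_exists_add.mp (Multiset.filter_le (2 ≤ ·) p.parts)
      have : p.parts.sum = (p.parts.filter (2 ≤ ·)).sum + u.sum := by rw [← Multiset.sum_add, ← hu]
      have h2 := p.parts_sum
      omega
    · simp only [Finset.mem_filter, Finset.mem_univ, true_and]
      intro i hi
      exact (Multiset.mem_filter.mp hi).2
  · intro x hx; exact Finset.mem_univ _
  · -- left inv : pad (trim p) = p
    intro p _
    apply Nat.Partition.ext
    show p.parts.filter (fun x => 2 ≤ x) +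
        Multiset.replicate (n - (p.parts.filter (fun x => 2 ≤ x)).sum) 1 = p.parts
    rw [← filter_not_eq, Multiset.filter_add_not]
  · -- right inv : trim (pad x) = x
    intro x hx
    obtain ⟨s, q⟩ := x
    have hq : ∀ i ∈ q.parts, 2 ≤ i := by
      have := (Finset.mem_sigma.mp hx).2
      simpa using this
    apply sigma_part_ext
    show (q.parts + Multiset.replicate (n - s) 1).filter (2 ≤ ·) = q.parts
    rw [Multiset.filter_add, Multiset.filter_eq_self.mpr hq,
      Multiset.filter_eq_nil.mpr, add_zero]
    intro i hi
    rw [Multiset.eq_of_mem_replicate hi]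
    norm_num
  · intro p _
    exact prod_trim a ha p

private lemma part_zero (a : ℕ → ℕ) :
    ∑ q ∈ Finset.univ.filter
        (fun q : Nat.Partition 0 => ∀ i ∈ q.parts, 2 ≤ i), ((q.parts.map a).prod) = 1 := by
  simp

private lemma part_one (a : ℕ → ℕ) :
    ∑ q ∈ Finset.univ.filter
        (fun q : Nat.Partition 1 => ∀ i ∈ q.parts, 2 ≤ i), ((q.parts.map a).prod) = 0 := by
  simp

/-- For `a : ℕ → ℕ` with `a 1 = 1` and any `n ≥ 1`, the recurrence
`a (n+2) = ∑_{p ⊢ n} ∏_{i ∈ p} a i` holds if and only if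
`a (n+2) = 1 + ∑_{k=2}^{n} ∑_{q ⊢ (n+2-k), all parts ≥ 2} ∏_{i ∈ q} a i` holds. -/
theorem stmt_6 (a : ℕ → ℕ) (ha : a 1 = 1) (n : ℕ) (hn : 1 ≤ n) :
    (a (n + 2) = ∑ p : Nat.Partition n, ((p.parts.map a).prod))
      ↔ (a (n + 2) = 1 + ∑ k ∈ Finset.Icc 2 n,
          ∑ q ∈ Finset.univ.filter
              (fun q : Nat.Partition (n + 2 - k) => ∀ i ∈ q.parts, 2 ≤ i),
            ((q.parts.map a).prod)) := by
  have key : ∑ k ∈ Finset.Icc 2 n,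
      ∑ q ∈ Finset.univ.filter
          (fun q : Nat.Partition (n + 2 - k) => ∀ i ∈ q.parts, 2 ≤ i),
        ((q.parts.map a).prod)
      = ∑ s ∈ Finset.Icc 2 n,
      ∑ q ∈ Finset.univ.filter
          (fun q : Nat.Partition s => ∀ i ∈ q.parts, 2 ≤ i),
        ((q.parts.map a).prod) := by
    refine Finset.sum_nbij' (fun k => n + 2 - k) (fun s => n + 2 - s) ?_ ?_ ?_ ?_ ?_
    · intro k hk; simp only [Finset.mem_Icc] at *; omega
    · intro s hs; simp only [Finset.mem_Icc] at *; omega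
    · intro k hk; simp only [Finset.mem_Icc] at hk; show n + 2 - (n + 2 - k) = k; omega
    · intro s hs; simp only [Finset.mem_Icc] at hs; show n + 2 - (n + 2 - s) = s; omega
    · intro k hk; rfl
  have split : (Finset.Icc 0 n) = insert 0 (insert 1 (Finset.Icc 2 n)) := by
    ext x
    simp only [Finset.mem_Icc, Finset.mem_insert]
    omega
  have hmain := main_eq a ha n
  rw [split, Finset.sum_insert (by simp), Finset.sum_insert (by simp), part_zero, part_one] at hmain
  rw [hmain, key]
  ring_nf
end
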